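/- (Strong Maximum Principle.) Let G = (V, ω, μ) be a locally finite connected weighted graph with D_μ < ∞, Ω ⊆ V a finite subset with nonempty interior Ω°, and T > 0. Suppose v : [0,T) × Ω → ℝ is bounded, continuous in t on [0,T) and differentiable in t on (0,T), k : [0,T) × Ω° → ℝ is bounded, and: (i) ∂_t v(t,x) − Δ_Ω v(t,x) − k(t,x) v(t,x) ≥ 0 for all (t,x) ∈ (0,T) × Ω°; (ii) v(0,x) ≥ 0 for all x ∈ Ω°; (iii) v(t,x) ≥ 0 for all (t,x) ∈ [0,T) × ∂Ω. Then v(t,x) ≥ 0 for all (t,x) ∈ [0,T) × Ω. -/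

import Mathlib

open Set

/-- The μ-Laplacian on a weighted graph; for `x` in the interior of a finite set `Ω`
(whose neighbours all lie in `Ω`) this is the Dirichlet Laplacian `Δ_Ω`. -/
noncomputable def graphLap {V : Type*} (ω : V → V → ℝ) (μ : V → ℝ)
    (h : V → ℝ) (x : V) : ℝ :=
  (∑' y, ω x y * (h y - h x)) / μ x

open Classical in
/-- The boundary `∂Ω = {x ∈ Ω : ∃ y ∉ Ω, y ~ x}` of a finite subset of a weighted graph. -/
noncomputable def graphBoundary {V : Type*} (ω : V → V → ℝ) (Ω : Finset V) : Finset V :=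
  Ω.filter fun x => ∃ y ∉ Ω, 0 < ω x y

open Classical in
/-- The interior `Ω° = Ω \ ∂Ω` of a finite subset of a weighted graph: the points of `Ω`
all of whose neighbours lie in `Ω`. -/
noncomputable def graphInterior {V : Type*} (ω : V → V → ℝ) (Ω : Finset V) : Finset V :=
  Ω.filter fun x => ∀ y, 0 < ω x y → y ∈ Ω

/-- Strong maximum principle: if `∂ₜv − Δ_Ω v − k v ≥ 0` on `(0,T) × Ω°`, `v(0,·) ≥ 0`
on `Ω°`, and `v ≥ 0` on `[0,T) × ∂Ω`, with `v` bounded and `k` bounded, then `v ≥ 0`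
on `[0,T) × Ω`. -/
theorem strong_maximum_principle
    {V : Type*} [Countable V] (ω : V → V → ℝ) (μ : V → ℝ)
    (hsymm : ∀ x y, ω x y = ω y x)
    (hwnn : ∀ x y, 0 ≤ ω x y)
    (hμpos : ∀ x, 0 < μ x)
    (hlocfin : ∀ x, {y | 0 < ω x y}.Finite)
    (hdeg : ∀ x, ∃ y, 0 < ω x y)
    (hconn : ∀ x y, Relation.ReflTransGen (fun a b => 0 < ω a b) x y)
    (Dμ : ℝ) (hDμ : ∀ x, (∑' y, ω x y) / μ x ≤ Dμ)
    (Ω : Finset V) (hΩne : Ω.Nonempty) (hΩint : (graphInterior ω Ω).Nonempty)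
    (T : ℝ) (hT : 0 < T)
    (v v' : ℝ → V → ℝ) (k : ℝ → V → ℝ)
    (hv_bdd : ∃ C, ∀ t ∈ Ico (0:ℝ) T, ∀ x ∈ Ω, |v t x| ≤ C)
    (hv_cont : ∀ x ∈ Ω, ContinuousOn (fun t => v t x) (Ico (0:ℝ) T))
    (hv_deriv : ∀ x ∈ Ω, ∀ t ∈ Ioo (0:ℝ) T, HasDerivAt (fun s => v s x) (v' t x) t)
    (hk_bdd : ∃ C, ∀ t ∈ Ico (0:ℝ) T, ∀ x ∈ graphInterior ω Ω, |k t x| ≤ C)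
    (hineq : ∀ t ∈ Ioo (0:ℝ) T, ∀ x ∈ graphInterior ω Ω,
      0 ≤ v' t x - graphLap ω μ (v t) x - k t x * v t x)
    (hinit : ∀ x ∈ graphInterior ω Ω, 0 ≤ v 0 x)
    (hbdry : ∀ t ∈ Ico (0:ℝ) T, ∀ x ∈ graphBoundary ω Ω, 0 ≤ v t x) :
    ∀ t ∈ Ico (0:ℝ) T, ∀ x ∈ Ω, 0 ≤ v t x := by
  classical
  obtain ⟨Ck, hCk⟩ := hk_bdd
  set lam : ℝ := Ck + 1 with hlamdef
  set u : ℝ → V → ℝ := fun s x => Real.exp (-(lam * s)) * v s x with hudef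
  intro t ht x hx
  set T' : ℝ := (t + T) / 2 with hT'def
  have htT' : t < T' := by
    rw [hT'def]; linarith [ht.2]
  have hT'T : T' < T := by
    rw [hT'def]; linarith [ht.1, ht.2]
  have hT'pos : 0 < T' := lt_of_le_of_lt ht.1 htT'
  have hIccsub : Icc (0:ℝ) T' ⊆ Ico 0 T := fun s hs => ⟨hs.1, lt_of_le_of_lt hs.2 hT'T⟩
  -- time minimum for each point of Ω
  have hminper : ∀ y ∈ Ω, ∃ s ∈ Icc (0:ℝ) T', ∀ r ∈ Icc (0:ℝ) T', u s y ≤ u r y := by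
    intro y hy
    have hc : ContinuousOn (fun s => u s y) (Icc 0 T') := by
      apply ContinuousOn.mul
      · exact (Real.continuous_exp.comp (continuous_const.mul continuous_id).neg).continuousOn
      · exact (hv_cont y hy).mono hIccsub
    obtain ⟨s, hs, hsmin⟩ := isCompact_Icc.exists_isMinOn ⟨0, left_mem_Icc.2 hT'pos.le⟩ hc
    exact ⟨s, hs, fun r hr => hsmin hr⟩
  choose tm htm hmintm using hminper
  -- global minimum over Ω
  set F : V → ℝ := fun y => if h : y ∈ Ω then u (tm y h) y else 0 with hFdef
  obtain ⟨x0, hx0, hx0min⟩ := Ω.exists_min_image F hΩne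
  set t0 : ℝ := tm x0 hx0 with ht0def
  set m : ℝ := u t0 x0 with hmdef
  have ht0mem : t0 ∈ Icc (0:ℝ) T' := htm x0 hx0
  have hglobal : ∀ s ∈ Icc (0:ℝ) T', ∀ y ∈ Ω, m ≤ u s y := by
    intro s hs y hy
    have h1 : F x0 ≤ F y := hx0min y hy
    have h2 : F y = u (tm y hy) y := by simp [hFdef, hy]
    have h3 : F x0 = m := by simp [hFdef, hx0, hmdef, ht0def]
    have h4 : u (tm y hy) y ≤ u s y := hmintm y hy s hs
    linarith
  have htIcc : t ∈ Icc (0:ℝ) T' := ⟨ht.1, htT'.le⟩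
  rcases le_or_gt 0 m with hm | hm
  · -- nonnegative minimum: done
    have h1 : (0:ℝ) ≤ u t x := le_trans hm (hglobal t htIcc x hx)
    have h2 : 0 < Real.exp (-(lam * t)) := Real.exp_pos _
    have h3 : u t x = Real.exp (-(lam * t)) * v t x := rfl
    nlinarith [h1, h2]
  · exfalso
    have hexp0 : 0 < Real.exp (-(lam * t0)) := Real.exp_pos _
    have hvneg : v t0 x0 < 0 := by
      have : Real.exp (-(lam * t0)) * v t0 x0 < 0 := hm
      nlinarith
    have ht0Ico : t0 ∈ Ico (0:ℝ) T := hIccsub ht0mem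
    -- x0 is interior
    have hint : x0 ∈ graphInterior ω Ω := by
      by_contra hxB
      have hBd : x0 ∈ graphBoundary ω Ω := by
        rw [graphBoundary, Finset.mem_filter]
        rw [graphInterior, Finset.mem_filter] at hxB
        push_neg at hxB
        obtain ⟨y, hy1, hy2⟩ := hxB hx0
        exact ⟨hx0, y, hy2, hy1⟩
      have := hbdry t0 ht0Ico x0 hBd
      linarith
    -- t0 ≠ 0
    have ht0ne : t0 ≠ 0 := by
      intro h0
      have h1 := hinit x0 hint
      rw [h0] at hvneg
      linarith
    have h0t0 : 0 < t0 := lt_of_le_of_ne ht0mem.1 (Ne.symm ht0ne)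
    have ht0T : t0 ∈ Ioo (0:ℝ) T := ⟨h0t0, ht0Ico.2⟩
    have hintΩ : ∀ y, 0 < ω x0 y → y ∈ Ω := by
      rw [graphInterior, Finset.mem_filter] at hint
      exact hint.2
    -- values at time t0 dominate v t0 x0 on Ω
    have hvm : ∀ y ∈ Ω, v t0 x0 ≤ v t0 y := by
      intro y hy
      have h1 : m ≤ u t0 y := hglobal t0 ht0mem y hy
      have h2 : Real.exp (-(lam * t0)) * v t0 x0 ≤ Real.exp (-(lam * t0)) * v t0 y := h1
      exact le_of_mul_le_mul_left h2 hexp0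
    -- Laplacian nonneg at min
    have hlap : 0 ≤ graphLap ω μ (v t0) x0 := by
      rw [graphLap]
      apply div_nonneg _ (hμpos x0).le
      have hsupp : ∀ y ∉ (hlocfin x0).toFinset, ω x0 y * (v t0 y - v t0 x0) = 0 := by
        intro y hy
        rw [Set.Finite.mem_toFinset] at hy
        have : ω x0 y = 0 := le_antisymm (not_lt.mp hy) (hwnn x0 y)
        simp [this]
      rw [tsum_eq_sum hsupp]
      apply Finset.sum_nonneg
      intro y hy
      rw [Set.Finite.mem_toFinset] at hy
      exact mul_nonneg (hwnn x0 y) (sub_nonneg.2 (hvm y (hintΩ y hy)))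
    -- time derivative of u at t0
    have hd : HasDerivAt (fun s => u s x0)
        ((-lam * Real.exp (-(lam * t0))) * v t0 x0 + Real.exp (-(lam * t0)) * v' t0 x0) t0 := by
      have h1 : HasDerivAt (fun s : ℝ => -(lam * s)) (-lam) t0 := by
        have := ((hasDerivAt_id t0).const_mul lam).neg
        simp only [mul_one] at this
        exact this
      have h2 : HasDerivAt (fun s : ℝ => Real.exp (-(lam * s)))
          (Real.exp (-(lam * t0)) * (-lam)) t0 := h1.exp
      have h3 := h2.mul (hv_deriv x0 hx0 t0 ht0T)
      exact h3.congr_deriv (by ring)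
    -- derivative is ≤ 0 at the min point via left slopes
    have hD : (-lam * Real.exp (-(lam * t0))) * v t0 x0 + Real.exp (-(lam * t0)) * v' t0 x0 ≤ 0 := by
      have hslope : Filter.Tendsto (slope (fun s => u s x0) t0) (nhdsWithin t0 (Iio t0))
          (nhds ((-lam * Real.exp (-(lam * t0))) * v t0 x0 + Real.exp (-(lam * t0)) * v' t0 x0)) := by
        apply (hasDerivAt_iff_tendsto_slope.mp hd).mono_left
        exact nhdsWithin_mono _ (fun s hs => ne_of_lt hs)
      apply le_of_tendsto hslope
      filter_upwards [Ioo_mem_nhdsLT h0t0] with s hs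
      have hsIcc : s ∈ Icc (0:ℝ) T' := ⟨hs.1.le, le_trans hs.2.le ht0mem.2⟩
      have h1 : u t0 x0 ≤ u s x0 := hglobal s hsIcc x0 hx0
      rw [slope_def_field]
      apply div_nonpos_of_nonneg_of_nonpos
      · linarith
      · linarith [hs.2]
    -- conclude: v' ≤ lam * v at (t0, x0)
    have hvle : v' t0 x0 ≤ lam * v t0 x0 := by nlinarith [hexp0]
    have h0 := hineq t0 ht0T x0 hint
    have hkb : |k t0 x0| ≤ Ck := hCk t0 ht0Ico x0 hint
    have hkle : k t0 x0 ≤ Ck := (abs_le.mp hkb).2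
    nlinarith [mul_nonneg (by linarith : (0:ℝ) ≤ Ck - k t0 x0) (by linarith : (0:ℝ) ≤ -(v t0 x0))]
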